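/- arXiv:1105.0165 — 3 statements merged into one kernel-verified Lean document; each statement's English description precedes it below -/
import Mathlib

section
/- The language L₃ = { w ∈ {a,b,c}* : |w|ₐ ≠ |w|_b and ( |w|ₐ = |w|_c or |w|_b = |w|_c ) } is not context-free, i.e., there is no context-free grammar generating L₃. -/
open ContextFreeGrammar

namespace L3aux

variable {T : Type} {g : ContextFreeGrammar.{0} T}

/-- Parse forests. -/
inductive PT (T : Type) (N : Type) : Type
  | nil : PT T N
  | term (t : T) (rest : PT T N) : PT T N
  | node (r : ContextFreeRule T N) (child : PT T N) (rest : PT T N) : PT T N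

namespace PT

def sent : PT T N → List (Symbol T N)
  | nil => []
  | term t p => Symbol.terminal t :: p.sent
  | node r _ p => Symbol.nonterminal r.input :: p.sent

def yield : PT T N → List T
  | nil => []
  | term t p => t :: p.yield
  | node _ c p => c.yield ++ p.yield

def size : PT T N → ℕ
  | nil => 0
  | term _ p => p.size
  | node _ c p => c.size + p.size + 1

def height : PT T N → ℕ
  | nil => 0
  | term _ p => p.height
  | node _ c p => max (c.height + 1) p.height

def Good (g : ContextFreeGrammar.{0} T) : PT T g.NT → Prop
  | nil => True
  | term _ p => p.Good g
  | node r c p => r ∈ g.rules ∧ c.sent = r.output ∧ c.Good g ∧ p.Good g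

@[simp] lemma sent_nil : (nil : PT T N).sent = [] := rfl
@[simp] lemma sent_term {t : T} {p : PT T N} : (term t p).sent = Symbol.terminal t :: p.sent := rfl
@[simp] lemma sent_node {r : ContextFreeRule T N} {c p : PT T N} :
    (node r c p).sent = Symbol.nonterminal r.input :: p.sent := rfl
@[simp] lemma yield_nil : (nil : PT T N).yield = [] := rfl
@[simp] lemma yield_term {t : T} {p : PT T N} : (term t p).yield = t :: p.yield := rfl
@[simp] lemma yield_node {r : ContextFreeRule T N} {c p : PT T N} :
    (node r c p).yield = c.yield ++ p.yield := rfl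
@[simp] lemma size_nil : (nil : PT T N).size = 0 := rfl
@[simp] lemma size_term {t : T} {p : PT T N} : (term t p).size = p.size := rfl
@[simp] lemma size_node {r : ContextFreeRule T N} {c p : PT T N} :
    (node r c p).size = c.size + p.size + 1 := rfl
@[simp] lemma good_nil : (nil : PT T g.NT).Good g := trivial
@[simp] lemma good_term {t : T} {p : PT T g.NT} : (term t p).Good g ↔ p.Good g := Iff.rfl
@[simp] lemma good_node {r : ContextFreeRule T g.NT} {c p : PT T g.NT} :
    (node r c p).Good g ↔ r ∈ g.rules ∧ c.sent = r.output ∧ c.Good g ∧ p.Good g := Iff.rfl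

/-- Soundness: a good forest's sentential form derives its yield. -/
lemma Good.derives : ∀ {p : PT T g.NT}, p.Good g →
    g.Derives p.sent (p.yield.map Symbol.terminal)
  | nil, _ => by simp [Derives.refl]
  | term t p, h => by
      simpa using (Good.derives (p := p) h).append_left [Symbol.terminal t]
  | node r c p, ⟨hr, hc, hgc, hgp⟩ => by
      have h1 : g.Produces [Symbol.nonterminal r.input] r.output :=
        ⟨r, hr, ContextFreeRule.Rewrites.input_output⟩
      have h2 : g.Derives r.output (c.yield.map Symbol.terminal) := hc ▸ Good.derives hgc
      have h3 : g.Derives (p.sent) (p.yield.map Symbol.terminal) := Good.derives hgp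
      have : g.Derives (Symbol.nonterminal r.input :: p.sent)
          (c.yield.map Symbol.terminal ++ p.yield.map Symbol.terminal) := by
        have := ((h1.trans_derives h2).append_right p.sent).trans
          ((h3).append_left (c.yield.map Symbol.terminal))
        simpa using this
      simpa using this

/-- Concatenation of forests. -/
def app : PT T N → PT T N → PT T N
  | nil, q => q
  | term t p, q => term t (app p q)
  | node r c p, q => node r c (app p q)

@[simp] lemma sent_app {p q : PT T N} : (app p q).sent = p.sent ++ q.sent := by
  induction p with
  | nil => simp [app]
  | term t p ih => simp [app, ih]
  | node r c p _ ih => simp [app, ih]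

@[simp] lemma yield_app {p q : PT T N} : (app p q).yield = p.yield ++ q.yield := by
  induction p with
  | nil => simp [app]
  | term t p ih => simp [app, ih]
  | node r c p _ ih => simp [app, ih]

lemma good_app {p q : PT T g.NT} (hp : p.Good g) (hq : q.Good g) : (app p q).Good g := by
  induction p with
  | nil => simpa [app]
  | term t p ih => exact ih hp
  | node r c p _ ih => exact ⟨hp.1, hp.2.1, hp.2.2.1, ih hp.2.2.2⟩

/-- All-terminal forest. -/
def ofWord : List T → PT T N
  | [] => nil
  | t :: w => term t (ofWord w)

@[simp] lemma sent_ofWord {w : List T} : (ofWord w : PT T N).sent = w.map Symbol.terminal := by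
  induction w with
  | nil => rfl
  | cons t w ih => simp [ofWord, ih]

@[simp] lemma yield_ofWord {w : List T} : (ofWord w : PT T N).yield = w := by
  induction w with
  | nil => rfl
  | cons t w ih => simp [ofWord, ih]

lemma good_ofWord {w : List T} : (ofWord w : PT T g.NT).Good g := by
  induction w with
  | nil => trivial
  | cons t w ih => exact ih

/-- Splitting a forest according to a split of its sentential form. -/
lemma split : ∀ (p : PT T N) (x y : List (Symbol T N)), p.sent = x ++ y →
    ∃ p₁ p₂ : PT T N, p = app p₁ p₂ ∧ p₁.sent = x ∧ p₂.sent = y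
  | nil, x, y, h => by
      rw [sent_nil] at h
      obtain ⟨hx, hy⟩ := List.append_eq_nil_iff.mp h.symm
      exact ⟨nil, nil, rfl, by simp [hx], by simp [hy]⟩
  | term t p, x, y, h => by
      match x with
      | [] => exact ⟨nil, term t p, rfl, rfl, by simpa using h⟩
      | s :: x =>
        rw [sent_term] at h
        obtain ⟨hs, hrest⟩ := List.cons_eq_cons.mp (by simpa using h)
        obtain ⟨p₁, p₂, rfl, h1, h2⟩ := split p x y hrest
        exact ⟨term t p₁, p₂, rfl, by simp [h1, hs], h2⟩
  | node r c p, x, y, h => by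
      match x with
      | [] => exact ⟨nil, node r c p, rfl, rfl, by simpa using h⟩
      | s :: x =>
        rw [sent_node] at h
        obtain ⟨hs, hrest⟩ := List.cons_eq_cons.mp (by simpa using h)
        obtain ⟨p₁, p₂, rfl, h1, h2⟩ := split p x y hrest
        exact ⟨node r c p₁, p₂, rfl, by simp [h1, hs], h2⟩

lemma good_app_iff {p q : PT T g.NT} : (app p q).Good g ↔ p.Good g ∧ q.Good g := by
  induction p with
  | nil => simp [app]
  | term t p ih => simpa [app] using ih
  | node r c p _ ih => simp [app, ih]; tauto

/-- Completeness: any derivation to a word is realized by a good forest. -/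
lemma exists_forest {s : List (Symbol T g.NT)} {w : List T}
    (h : g.Derives s (w.map Symbol.terminal)) :
    ∃ p : PT T g.NT, p.Good g ∧ p.sent = s ∧ p.yield = w := by
  induction h using Relation.ReflTransGen.head_induction_on with
  | refl =>
    exact ⟨ofWord w, good_ofWord, by simp, by simp⟩
  | head hstep _ ih =>
    obtain ⟨r, hr, hrw⟩ := hstep
    obtain ⟨x, y, hu, hv⟩ := hrw.exists_parts
    obtain ⟨p, hg, hs, hy⟩ := ih
    rw [hv] at hs
    obtain ⟨p₁, p₂₃, rfl, hs1, hs23⟩ := split p x (r.output ++ y) (by simpa using hs)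
    obtain ⟨p₂, p₃, rfl, hs2, hs3⟩ := split p₂₃ r.output y hs23
    rw [good_app_iff, good_app_iff] at hg
    refine ⟨app p₁ (node r p₂ p₃), good_app hg.1 ⟨hr, hs2, hg.2.1, hg.2.2⟩, ?_, ?_⟩
    · simp [hs1, hs3, hu]
    · simpa using hy

end PT

end L3aux

namespace L3aux

variable {T : Type} {g : ContextFreeGrammar.{0} T} {N : Type}

namespace PT

/-- Subtree (suffix-subforest) relation. -/
inductive Sub : PT T N → PT T N → Prop
  | refl (p : PT T N) : Sub p p
  | term (t : T) {q p : PT T N} : Sub q p → Sub q (PT.term t p)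
  | nodeRest (r : ContextFreeRule T N) (c : PT T N) {q p : PT T N} :
      Sub q p → Sub q (PT.node r c p)
  | nodeChild (r : ContextFreeRule T N) (p : PT T N) {q c : PT T N} :
      Sub q c → Sub q (PT.node r c p)
  | head (r : ContextFreeRule T N) (c p : PT T N) : Sub (PT.node r c PT.nil) (PT.node r c p)

lemma Sub.nil_sub : ∀ p : PT T N, Sub nil p
  | PT.nil => Sub.refl _
  | PT.term t p => Sub.term t (Sub.nil_sub p)
  | PT.node r c p => Sub.nodeRest r c (Sub.nil_sub p)

lemma Sub.trans {a b c : PT T N} (hab : Sub a b) (hbc : Sub b c) : Sub a c := by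
  induction hbc with
  | refl => exact hab
  | term t _ ih => exact Sub.term t (ih hab)
  | nodeRest r c _ ih => exact Sub.nodeRest r c (ih hab)
  | nodeChild r p _ ih => exact Sub.nodeChild r p (ih hab)
  | head r c p =>
      cases hab with
      | refl => exact Sub.head r c p
      | nodeRest _ _ h => cases h; exact Sub.nodeRest r c (Sub.nil_sub p)
      | nodeChild _ _ h => exact Sub.nodeChild r p h
      | head _ _ _ => exact Sub.head r c p

lemma Sub.size_le {q p : PT T N} (h : Sub q p) : q.size ≤ p.size := by
  induction h with
  | refl => exact Nat.le_refl _
  | term t _ ih => simpa using ih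
  | nodeRest r c _ ih => simp; omega
  | nodeChild r p _ ih => simp; omega
  | head r c p => simp

lemma Sub.good {q p : PT T g.NT} (h : Sub q p) (hp : p.Good g) : q.Good g := by
  induction h with
  | refl => exact hp
  | term t _ ih => exact ih hp
  | nodeRest r c _ ih => exact ih hp.2.2.2
  | nodeChild r p _ ih => exact ih hp.2.2.1
  | head r c p => exact ⟨hp.1, hp.2.1, hp.2.2.1, trivial⟩

/-- Context lemma: the yield of a subtree sits inside the yield of the host, and
the host's sentential form derives the context with the subtree's sentential form plugged in. -/
lemma Sub.ctx {q p : PT T g.NT} (h : Sub q p) (hp : p.Good g) :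
    ∃ u z : List T, p.yield = u ++ q.yield ++ z ∧
      g.Derives p.sent (u.map Symbol.terminal ++ q.sent ++ z.map Symbol.terminal) := by
  induction h with
  | refl p => exact ⟨[], [], by simp, by simp [Derives.refl]⟩
  | @term t q p _ ih =>
      obtain ⟨u, z, hy, hd⟩ := ih hp
      refine ⟨t :: u, z, by simp [hy], ?_⟩
      simpa using hd.append_left [Symbol.terminal t]
  | @nodeRest r c q p _ ih =>
      obtain ⟨u, z, hy, hd⟩ := ih hp.2.2.2
      refine ⟨c.yield ++ u, z, by simp [hy], ?_⟩
      have h1 : g.Derives [Symbol.nonterminal r.input] (c.yield.map Symbol.terminal) :=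
        (Produces.trans_derives ⟨r, hp.1, ContextFreeRule.Rewrites.input_output⟩
          (hp.2.1 ▸ Good.derives hp.2.2.1))
      have := (h1.append_right p.sent).trans (hd.append_left (c.yield.map Symbol.terminal))
      simpa using this
  | @nodeChild r p q c _ ih =>
      obtain ⟨u, z, hy, hd⟩ := ih hp.2.2.1
      refine ⟨u, z ++ p.yield, by simp [hy], ?_⟩
      have h1 : g.Derives [Symbol.nonterminal r.input]
          (u.map Symbol.terminal ++ q.sent ++ z.map Symbol.terminal) :=
        (Produces.trans_derives ⟨r, hp.1, ContextFreeRule.Rewrites.input_output⟩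
          (hp.2.1 ▸ hd))
      have h3 : g.Derives p.sent (p.yield.map Symbol.terminal) := Good.derives hp.2.2.2
      have := (h1.append_right p.sent).trans
        (h3.append_left (u.map Symbol.terminal ++ q.sent ++ z.map Symbol.terminal))
      refine Derives.trans ?_ (by simpa using this)
      simp [Derives.refl]
  | head r c p =>
      refine ⟨[], p.yield, by simp, ?_⟩
      have h3 : g.Derives p.sent (p.yield.map Symbol.terminal) := Good.derives hp.2.2.2
      simpa using h3.append_left [Symbol.nonterminal r.input]

/-- Replacing a subtree by another tree with the same sent and yield. -/
lemma Sub.replace {q p : PT T g.NT} (h : Sub q p) :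
    ∀ q' : PT T g.NT, q'.Good g → q'.sent = q.sent → q'.yield = q.yield →
    ∃ p' : PT T g.NT, (p.Good g → p'.Good g) ∧ p'.sent = p.sent ∧ p'.yield = p.yield ∧
      p'.size + q.size = p.size + q'.size := by
  induction h with
  | refl p => exact fun q' h1 h2 h3 => ⟨q', fun _ => h1, h2, h3, by omega⟩
  | @term t q p _ ih =>
      intro q' h1 h2 h3
      obtain ⟨p', hg, hs, hy, hsz⟩ := ih q' h1 h2 h3
      exact ⟨PT.term t p', fun hh => hg hh, by simp [hs], by simp [hy], by simpa using hsz⟩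
  | @nodeRest r c q p _ ih =>
      intro q' h1 h2 h3
      obtain ⟨p', hg, hs, hy, hsz⟩ := ih q' h1 h2 h3
      exact ⟨PT.node r c p', fun hh => ⟨hh.1, hh.2.1, hh.2.2.1, hg hh.2.2.2⟩,
        by simp [hs], by simp [hy], by simp; omega⟩
  | @nodeChild r p q c _ ih =>
      intro q' h1 h2 h3
      obtain ⟨c', hg, hs, hy, hsz⟩ := ih q' h1 h2 h3
      exact ⟨PT.node r c' p, fun hh => ⟨hh.1, hs.trans hh.2.1, hg hh.2.2.1, hh.2.2.2⟩,
        by simp [hs], by simp [hy], by simp; omega⟩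
  | head r c p =>
      intro q' h1 h2 h3
      match q', h2 with
      | PT.node r' c' rest', h2 =>
        have hsr : rest'.sent = [] := by
          have := h2
          simp at this
          exact this.2
        match rest', hsr with
        | PT.nil, _ =>
          have hin : r'.input = r.input := by simpa using h2
          refine ⟨PT.node r' c' p, fun hh => ⟨h1.1, h1.2.1, h1.2.2.1, hh.2.2.2⟩,
            by simp [hin], by simpa using congrArg (· ++ p.yield) h3, by simp; omega⟩

end PT

end L3aux

namespace L3aux

variable {T : Type} {g : ContextFreeGrammar.{0} T} {N : Type}

/-- Branching bound of a grammar. -/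
def K (g : ContextFreeGrammar.{0} T) : ℕ := max 2 (g.rules.sup (fun r => r.output.length))

lemma two_le_K : 2 ≤ K g := le_max_left _ _

lemma output_len_le_K {r : ContextFreeRule T g.NT} (hr : r ∈ g.rules) :
    r.output.length ≤ K g :=
  le_trans (Finset.le_sup (f := fun r => r.output.length) hr) (le_max_right _ _)

namespace PT

lemma sum_bound : ∀ (q : PT T N) (B : ℕ), 1 ≤ B →
    (∀ r c, Sub (node r (c : PT T N) nil) q → c.yield.length ≤ B) →
    q.yield.length ≤ q.sent.length * B := by
  intro q
  induction q with
  | nil => intro B hB h; simp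
  | term t p ih =>
      intro B hB h
      have := ih B hB (fun r c hsub => h r c (Sub.term t hsub))
      simp only [yield_term, sent_term, List.length_cons]
      calc p.yield.length + 1 ≤ p.sent.length * B + B := by omega
        _ = (p.sent.length + 1) * B := by ring
  | node r c p ihc ihp =>
      intro B hB h
      have h1 : c.yield.length ≤ B := h r c (Sub.head r c p)
      have h2 := ihp B hB (fun r' c' hsub => h r' c' (Sub.nodeRest r c hsub))
      simp only [yield_node, sent_node, List.length_append, List.length_cons]
      calc c.yield.length + p.yield.length ≤ B + p.sent.length * B := by omega
        _ = (p.sent.length + 1) * B := by ring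

lemma step {r : ContextFreeRule T g.NT} {c : PT T g.NT}
    (hg : (node r c nil).Good g) {B : ℕ} (hB : 1 ≤ B)
    (hy : K g * B < (node r c nil).yield.length) :
    ∃ r' c', Sub (node r' c' nil) (node r c nil) ∧ (node r' c' nil).size < (node r c nil).size ∧
      B < (node r' c' nil).yield.length := by
  by_contra hcon
  push_neg at hcon
  have hall : ∀ r' c', Sub (node r' (c' : PT T g.NT) nil) c → c'.yield.length ≤ B := by
    intro r' c' hsub
    have hsub' : Sub (node r' c' nil) (node r c nil) := Sub.nodeChild r nil hsub
    have hsz : (node r' c' nil).size < (node r c nil).size := by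
      have := hsub.size_le
      simp at this ⊢
      omega
    have := hcon r' c' hsub' hsz
    simpa using this
  have := sum_bound c B hB hall
  have hlen : c.sent.length ≤ K g := by
    rw [hg.2.1]
    exact output_len_le_K hg.1
  have : c.yield.length ≤ K g * B :=
    le_trans this (Nat.mul_le_mul_right B hlen)
  simp at hy
  omega

/-- Window lemma: inside a tree of yield longer than `K^n` there is a subtree whose
yield length lies in the window `(K^n, K^(n+1)]`. -/
lemma window : ∀ (sz : ℕ) (r : ContextFreeRule T g.NT) (c : PT T g.NT),
    (node r c nil).size ≤ sz → (node r c nil).Good g → ∀ n : ℕ,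
    K g ^ n < (node r c nil).yield.length →
    ∃ r' c', Sub (node r' c' nil) (node r c nil) ∧
      K g ^ n < (node r' c' nil).yield.length ∧
      (node r' c' nil).yield.length ≤ K g ^ (n + 1) := by
  intro sz
  induction sz with
  | zero => intro r c hsz; simp at hsz
  | succ m ih =>
      intro r c hsz hg n hy
      by_cases hle : (node r c nil).yield.length ≤ K g ^ (n + 1)
      · exact ⟨r, c, Sub.refl _, hy, hle⟩
      · push_neg at hle
        have hKn : K g * K g ^ n ≤ K g ^ (n+1) := by ring_nf; exact Nat.le_refl _
        obtain ⟨r', c', hsub, hszlt, hy'⟩ := step (B := K g ^ n) hg (Nat.one_le_pow _ _ (by have := two_le_K (g:=g); omega)) (by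
          calc K g * K g ^ n ≤ K g ^ (n+1) := hKn
            _ < _ := hle)
        have := ih r' c' (by omega) (hsub.good hg) n hy'
        obtain ⟨r'', c'', hsub', h1, h2⟩ := this
        exact ⟨r'', c'', hsub'.trans hsub, h1, h2⟩

/-- Chain lemma: a tree with yield longer than `K^n` contains a strictly descending
chain of `n` further subtrees. -/
lemma chain : ∀ (n : ℕ) (r : ContextFreeRule T g.NT) (c : PT T g.NT),
    (node r c nil).Good g → K g ^ n < (node r c nil).yield.length →
    ∃ ts : List (PT T g.NT),
      List.Chain (fun a b => Sub b a ∧ b.size < a.size) (node r c nil) ts ∧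
      ts.length = n ∧ ∀ x ∈ ts, ∃ r' c', x = node r' (c' : PT T g.NT) nil := by
  intro n
  induction n with
  | zero => intro r c _ _; exact ⟨[], List.Chain.nil, rfl, by simp⟩
  | succ m ih =>
      intro r c hg hy
      obtain ⟨r', c', hsub, hszlt, hy'⟩ := step (B := K g ^ m) hg (Nat.one_le_pow _ _ (by have := two_le_K (g:=g); omega)) (by
        calc K g * K g ^ m ≤ K g ^ (m+1) := by ring_nf; exact Nat.le_refl _
          _ < _ := hy)
      obtain ⟨ts, hch, hlen, hall⟩ := ih r' c' (hsub.good hg) hy'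
      refine ⟨node r' c' nil :: ts, List.Chain.cons ⟨hsub, hszlt⟩ hch, by simp [hlen], ?_⟩
      intro x hx
      rcases List.mem_cons.mp hx with h | h
      · exact ⟨r', c', h⟩
      · exact hall x h

end PT

end L3aux

namespace L3aux

variable {T : Type} {g : ContextFreeGrammar.{0} T} {N : Type}

open PT

/-- Iterated pumping of a derivation. -/
lemma pump_derives {A : g.NT} {V X Y : List (Symbol T g.NT)}
    (h1 : g.Derives [Symbol.nonterminal A] (V ++ [Symbol.nonterminal A] ++ Y))
    (h2 : g.Derives [Symbol.nonterminal A] X) :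
    ∀ i : ℕ, g.Derives [Symbol.nonterminal A]
      ((List.replicate i V).flatten ++ X ++ (List.replicate i Y).flatten) := by
  intro i
  induction i with
  | zero => simpa using h2
  | succ m ih =>
      have step2 : g.Derives (V ++ [Symbol.nonterminal A] ++ Y)
          (V ++ ((List.replicate m V).flatten ++ X ++ (List.replicate m Y).flatten) ++ Y) := by
        have := (ih.append_left V).append_right Y
        simpa [List.append_assoc] using this
      have heq : V ++ ((List.replicate m V).flatten ++ X ++ (List.replicate m Y).flatten) ++ Y
          = (List.replicate (m+1) V).flatten ++ X ++ (List.replicate (m+1) Y).flatten := by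
        rw [List.replicate_succ, List.replicate_succ' (n := m) (a := Y)]
        simp only [List.flatten_cons, List.flatten_append, List.flatten_cons, List.flatten_nil,
          List.append_assoc, List.append_nil]
      exact heq ▸ (h1.trans step2)

lemma sent_eq_nil : ∀ {p : PT T N}, p.sent = [] → p = PT.nil
  | PT.nil, _ => rfl

lemma sent_singleton {A : N} : ∀ {p : PT T N}, p.sent = [Symbol.nonterminal A] →
    ∃ r c, p = PT.node r c PT.nil ∧ r.input = A := by
  intro p hp
  match p, hp with
  | PT.node r c rest, hp =>
    rw [sent_node] at hp
    obtain ⟨h1, h2⟩ := List.cons_eq_cons.mp hp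
    exact ⟨r, c, by rw [sent_eq_nil h2], by injection h1⟩

lemma flatten_replicate_map {f : α → β} (n : ℕ) (v : List α) :
    (List.replicate n (v.map f)).flatten = ((List.replicate n v).flatten).map f := by
  induction n with
  | zero => simp
  | succ m ih =>
      rw [List.replicate_succ, List.replicate_succ, List.flatten_cons, List.flatten_cons,
        List.map_append, ih]

/-- The pumping lemma for context-free languages. -/
lemma pumping (g : ContextFreeGrammar.{0} T) :
    ∃ p : ℕ, 1 ≤ p ∧ ∀ w ∈ g.language, p ≤ w.length →
      ∃ u v x y z : List T, w = u ++ v ++ x ++ y ++ z ∧ 1 ≤ (v ++ y).length ∧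
        (v ++ x ++ y).length ≤ p ∧
        ∀ i : ℕ, u ++ (List.replicate i v).flatten ++ x ++ (List.replicate i y).flatten ++ z
          ∈ g.language := by
  classical
  set k : ℕ := (g.rules.image (fun r => r.input)).card with hk
  refine ⟨K g ^ (k + 1) + 1, by omega, ?_⟩
  intro w hw hwlen
  have hKpow : K g ^ k ≤ K g ^ (k + 1) :=
    Nat.pow_le_pow_right (le_trans one_le_two two_le_K) (Nat.le_succ k)
  -- minimal parse tree
  have hex : ∃ n : ℕ, ∃ pt : PT T g.NT, pt.Good g ∧
      pt.sent = [Symbol.nonterminal g.initial] ∧ pt.yield = w ∧ pt.size = n := by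
    obtain ⟨pt, h1, h2, h3⟩ := PT.exists_forest (g := g) hw
    exact ⟨pt.size, pt, h1, h2, h3, rfl⟩
  obtain ⟨pt₀, hg₀, hs₀, hy₀, hsz₀⟩ := Nat.find_spec hex
  -- pt₀ is a tree
  obtain ⟨r₀, c₀, rfl, hr₀⟩ := sent_singleton hs₀
  -- window
  obtain ⟨r₁, c₁, hsub₁, hwin₁, hwin₂⟩ := PT.window (g := g) (PT.node r₀ c₀ PT.nil).size r₀ c₀
    (Nat.le_refl _) hg₀ k (by rw [hy₀]; omega)
  -- chain
  obtain ⟨ts, hch, htslen, htsall⟩ := PT.chain (g := g) k r₁ c₁ (hsub₁.good hg₀) hwin₁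
  set R : PT T g.NT → PT T g.NT → Prop := fun a b => PT.Sub b a ∧ b.size < a.size with hR
  haveI : IsTrans (PT T g.NT) R := ⟨fun a b c hab hbc => ⟨hbc.1.trans hab.1, by
    have := hab.2; have := hbc.2; omega⟩⟩
  have hpw : (PT.node r₁ c₁ PT.nil :: ts).Pairwise R := hch.pairwise
  set l : List (PT T g.NT) := PT.node r₁ c₁ PT.nil :: ts with hl
  have hlen : l.length = k + 1 := by simp [hl, htslen]
  have hsub_t₁ : ∀ x ∈ l, PT.Sub x (PT.node r₁ c₁ PT.nil) := by
    intro x hx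
    rcases List.mem_cons.mp hx with h | h
    · exact h ▸ PT.Sub.refl _
    · exact (List.rel_of_pairwise_cons hpw h).1
  have hgood : ∀ x ∈ l, x.Good g := fun x hx =>
    ((hsub_t₁ x hx).trans hsub₁).good hg₀
  have htree : ∀ x ∈ l, ∃ r' c', x = PT.node r' (c' : PT T g.NT) PT.nil := by
    intro x hx
    rcases List.mem_cons.mp hx with h | h
    · exact ⟨r₁, c₁, h⟩
    · exact htsall x h
  -- pigeonhole on the root nonterminals
  have hmaps : ∀ i : Fin l.length, ∃ r' c', l.get i = PT.node r' (c' : PT T g.NT) PT.nil ∧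
      r' ∈ g.rules := by
    intro i
    have hmem : l.get i ∈ l := List.get_mem l i
    obtain ⟨r', c', hx⟩ := htree (l.get i) hmem
    have := hgood (l.get i) hmem
    rw [hx] at this
    exact ⟨r', c', hx, this.1⟩
  choose rt ct hrtct hrtmem using hmaps
  have hpigeon : ∃ i j : Fin l.length, (i : ℕ) < (j : ℕ) ∧ (rt i).input = (rt j).input := by
    have hcard : (g.rules.image (fun r => r.input)).card
        < (Finset.univ : Finset (Fin l.length)).card := by
      simp [hlen, hk]
    obtain ⟨i, _, j, _, hij, hfij⟩ := Finset.exists_ne_map_eq_of_card_lt_of_maps_to hcard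
      (fun i _ => Finset.mem_image_of_mem (fun r => r.input) (hrtmem i))
    rcases lt_or_gt_of_ne (fun h : (i : ℕ) = (j : ℕ) => hij (Fin.ext h)) with h | h
    · exact ⟨i, j, h, hfij⟩
    · exact ⟨j, i, h, hfij.symm⟩
  obtain ⟨i, j, hij, hroots⟩ := hpigeon
  have hmi : l.get i ∈ l := List.get_mem l i
  have hmj : l.get j ∈ l := List.get_mem l j
  have hRij : R (l.get i) (l.get j) := List.pairwise_iff_get.mp hpw i j hij
  -- set up the two nested trees
  have hgi := hgood _ hmi
  have hgj := hgood _ hmj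
  have hsub_ti : PT.Sub (l.get i) (PT.node r₀ c₀ PT.nil) := (hsub_t₁ _ hmi).trans hsub₁
  obtain ⟨u, z, hyuz, hduz⟩ := hsub_ti.ctx hg₀
  obtain ⟨v, y, hyvy, hdvy⟩ := hRij.1.ctx hgi
  set x : List T := (l.get j).yield with hx
  have hdx : g.Derives ((l.get j).sent) (x.map Symbol.terminal) := Good.derives hgj
  have hsenti : (l.get i).sent = [Symbol.nonterminal (rt i).input] := by rw [hrtct i]; rfl
  have hsentj : (l.get j).sent = [Symbol.nonterminal (rt i).input] := by
    rw [hrtct j, hroots]; rfl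
  -- length bound for vxy
  obtain ⟨a₁, b₁, hyab, _⟩ := (hsub_t₁ _ hmi).ctx (hsub₁.good hg₀)
  have hbound : (v ++ x ++ y).length ≤ K g ^ (k + 1) + 1 := by
    have h1 : (l.get i).yield.length ≤ (PT.node r₁ c₁ PT.nil).yield.length := by
      rw [hyab]; simp; omega
    have h2 : (l.get i).yield.length = v.length + x.length + y.length := by
      rw [hyvy, hx]; simp; omega
    simp only [List.length_append]
    omega
  -- nonemptiness of v ++ y, via minimality
  have hne : 1 ≤ (v ++ y).length := by
    by_contra hcon
    have hv : v = [] := by simp at hcon; exact hcon.1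
    have hy : y = [] := by simp at hcon; exact hcon.2
    have hyieldeq : (l.get j).yield = (l.get i).yield := by
      rw [hyvy, hv, hy]; simp [hx]
    obtain ⟨p', hgp', hsp', hyp', hszp'⟩ := hsub_ti.replace (l.get j) hgj
      (hsentj.trans hsenti.symm) hyieldeq
    have hsmall : p'.size < Nat.find hex := by
      have := hRij.2
      omega
    exact Nat.find_min hex hsmall ⟨p', hgp' hg₀, hsp'.trans hs₀, hyp'.trans hy₀, rfl⟩
  -- assemble
  refine ⟨u, v, x, y, z, ?_, hne, hbound, ?_⟩
  · rw [← hy₀, hyuz, hyvy, hx]; simp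
  · intro n
    rw [mem_language_iff]
    have hA := pump_derives (A := (rt i).input)
      (V := v.map Symbol.terminal) (X := x.map Symbol.terminal) (Y := y.map Symbol.terminal)
      (by rw [hsenti, hsentj] at hdvy; exact hdvy)
      (by rw [hsentj] at hdx; exact hdx) n
    have hctx : g.Derives [Symbol.nonterminal g.initial]
        (u.map Symbol.terminal ++ [Symbol.nonterminal (rt i).input] ++ z.map Symbol.terminal) := by
      rw [← hs₀, ← hsenti]; exact hduz
    have := hctx.trans (((hA.append_left (u.map Symbol.terminal)).append_right
      (z.map Symbol.terminal)).trans (Derives.refl _))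
    refine Derives.trans (by simpa [List.append_assoc] using this) ?_
    rw [List.map_append, List.map_append, List.map_append, List.map_append,
      ← flatten_replicate_map, ← flatten_replicate_map]
    simp only [List.append_assoc]
    exact Derives.refl _

end L3aux

namespace L3aux

lemma count_flatten_replicate {α : Type} [BEq α] (a : α) (i : ℕ) (v : List α) :
    ((List.replicate i v).flatten).count a = i * v.count a := by
  induction i with
  | zero => simp
  | succ m ih =>
      rw [List.replicate_succ, List.flatten_cons, List.count_append, ih]
      ring

lemma fin3_count_len : ∀ l : List (Fin 3), l.count 0 + l.count 1 + l.count 2 = l.length := by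
  intro l
  induction l with
  | nil => simp
  | cons a l ih =>
      simp only [List.count_cons, List.length_cons]
      fin_cases a <;> simp <;> omega

end L3aux

/-- The language `L₃ = { w ∈ {a,b,c}* : |w|ₐ ≠ |w|_b ∧ (|w|ₐ = |w|_c ∨ |w|_b = |w|_c) }`
(over the alphabet `Fin 3`, with `a = 0`, `b = 1`, `c = 2`) is not context-free. -/
theorem L3_not_contextFree :
    ¬ Language.IsContextFree
      { w : List (Fin 3) |
        w.count 0 ≠ w.count 1 ∧ (w.count 0 = w.count 2 ∨ w.count 1 = w.count 2) } := by
  rintro ⟨g, hgL⟩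
  obtain ⟨p, hp1, hpump⟩ := L3aux.pumping g
  set N : ℕ := p + 3 with hN
  set m : ℕ := N + N.factorial with hm
  have hNfact : N < N.factorial := Nat.lt_factorial_self (by omega)
  set w : List (Fin 3) := List.replicate m 0 ++ List.replicate N 1 ++ List.replicate m 2 with hwdef
  have hc0 : w.count 0 = m := by simp [hwdef, List.count_replicate]
  have hc1 : w.count 1 = N := by simp [hwdef, List.count_replicate]
  have hc2 : w.count 2 = m := by simp [hwdef, List.count_replicate]
  have hwmem : w ∈ g.language := by
    rw [hgL]
    refine ⟨by rw [hc0, hc1]; omega, Or.inl (by rw [hc0, hc2])⟩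
  have hwlen : p ≤ w.length := by
    simp [hwdef]
    omega
  obtain ⟨u, v, x, y, z, hsplit, hvy, hvxy, hpumped⟩ := hpump w hwmem hwlen
  set s : List (Fin 3) := v ++ x ++ y with hs
  have hws : w = u ++ s ++ z := by rw [hsplit, hs]; simp [List.append_assoc]
  have hslen : s.length ≤ N := by
    have : s.length ≤ p := hvxy
    omega
  -- contiguity: s cannot contain both 0 and 2
  have hcontig : s.count 0 = 0 ∨ s.count 2 = 0 := by
    by_contra hcon
    push_neg at hcon
    obtain ⟨h0, h2⟩ := hcon
    have claim1 : u.length < m := by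
      by_contra hge
      push_neg at hge
      have hdrop : List.drop u.length w = s ++ z := by
        rw [hws, List.append_assoc, List.drop_left]
      have hdropm : List.drop m w = List.replicate N 1 ++ List.replicate m 2 := by
        have h := List.drop_left (l₁ := List.replicate m (0 : Fin 3))
          (l₂ := List.replicate N 1 ++ List.replicate m 2)
        rw [hwdef, List.append_assoc]
        simpa using h
      have heq2 : List.drop u.length w = List.drop (u.length - m) (List.drop m w) := by
        rw [List.drop_drop]
        congr 1
        omega
      have hsub : (List.drop u.length w).count 0 ≤ (List.drop m w).count 0 := by
        rw [heq2]
        exact (List.drop_sublist _ _).count_le _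
      rw [hdrop, hdropm] at hsub
      simp [List.count_append, List.count_replicate] at hsub
      omega
    have claim2 : m + N < u.length + s.length := by
      by_contra hge
      push_neg at hge
      have htake : List.take (u.length + s.length) w = u ++ s := by
        rw [hws]
        have : u.length + s.length = (u ++ s).length := by simp
        rw [this, List.take_left]
      have htakemp : List.take (m + N) w = List.replicate m 0 ++ List.replicate N 1 := by
        have h := List.take_left (l₁ := List.replicate m (0 : Fin 3) ++ List.replicate N 1)
          (l₂ := List.replicate m 2)
        rw [hwdef]
        simpa using h
      have heq2 : List.take (u.length + s.length) w
          = List.take (u.length + s.length) (List.take (m + N) w) := by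
        rw [List.take_take, min_eq_left hge]
      have hsub : (u ++ s).count 2 ≤ (List.take (m + N) w).count 2 := by
        rw [← htake, heq2]
        exact (List.take_sublist _ _).count_le _
      rw [htakemp] at hsub
      simp [List.count_append, List.count_replicate] at hsub
      omega
    omega
  -- per-letter pump amounts
  set a0 : ℕ := v.count 0 + y.count 0 with ha0
  set a1 : ℕ := v.count 1 + y.count 1 with ha1
  set a2 : ℕ := v.count 2 + y.count 2 with ha2
  have hsum : a0 + a1 + a2 ≥ 1 := by
    have hv := L3aux.fin3_count_len v
    have hy := L3aux.fin3_count_len y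
    have := hvy
    simp only [List.length_append] at this
    omega
  have hscount : ∀ σ : Fin 3, s.count σ = v.count σ + x.count σ + y.count σ := by
    intro σ; rw [hs]; simp [List.count_append]; omega
  have ha1le : a1 ≤ N := by
    have h1 : s.count 1 ≤ s.length := List.count_le_length
    have := hscount 1
    omega
  have hconstraint : a0 = 0 ∨ a2 = 0 := by
    rcases hcontig with h | h
    · left; have := hscount 0; omega
    · right; have := hscount 2; omega
  -- counts of the pumped words
  have hWcount : ∀ (i : ℕ) (σ : Fin 3),
      (u ++ (List.replicate i v).flatten ++ x ++ (List.replicate i y).flatten ++ z).count σ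
      = u.count σ + i * v.count σ + x.count σ + i * y.count σ + z.count σ := by
    intro i σ
    simp [List.count_append, L3aux.count_flatten_replicate]
    ring
  have hbase : ∀ σ : Fin 3, u.count σ + v.count σ + x.count σ + y.count σ + z.count σ
      = w.count σ := by
    intro σ
    rw [hsplit]
    simp [List.count_append]
    omega
  have hmem : ∀ i : ℕ,
      (u ++ (List.replicate i v).flatten ++ x ++ (List.replicate i y).flatten ++ z) ∈
      { w : List (Fin 3) |
        w.count 0 ≠ w.count 1 ∧ (w.count 0 = w.count 2 ∨ w.count 1 = w.count 2) } := by
    intro i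
    rw [← hgL]
    exact hpumped i
  -- derive a contradiction by case analysis
  have hb0 := hbase 0; rw [hc0] at hb0
  have hb1 := hbase 1; rw [hc1] at hb1
  have hb2 := hbase 2; rw [hc2] at hb2
  rcases Nat.eq_zero_or_pos a0 with h0 | h0
  · rcases Nat.eq_zero_or_pos a2 with h2 | h2
    · -- a0 = a2 = 0, a1 > 0
      have ha1pos : 1 ≤ a1 := by omega
      have hdvd : a1 ∣ N.factorial := Nat.dvd_factorial ha1pos ha1le
      set i : ℕ := N.factorial / a1 + 1 with hi
      have hfac : (N.factorial / a1) * a1 = N.factorial := Nat.div_mul_cancel hdvd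
      obtain ⟨hne, _⟩ := hmem i
      rw [hWcount i 0, hWcount i 1] at hne
      apply hne
      have hv0 : v.count (0:Fin 3) = 0 := by omega
      have hy0 : y.count (0:Fin 3) = 0 := by omega
      have e0 : u.count (0:Fin 3) + i * v.count 0 + x.count 0 + i * y.count 0 + z.count 0
          = m := by
        rw [hv0, hy0]
        simp
        omega
      have e1 : u.count (1:Fin 3) + i * v.count 1 + x.count 1 + i * y.count 1 + z.count 1
          = m := by
        have hh : i * v.count (1:Fin 3) + i * y.count 1 = i * a1 := by rw [ha1]; ring
        have : i * a1 = a1 + N.factorial := by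
          rw [hi]
          calc (N.factorial / a1 + 1) * a1 = (N.factorial / a1) * a1 + a1 := by ring
            _ = a1 + N.factorial := by omega
        omega
      omega
    · -- a2 > 0, hence a0 = 0
      have ha0z : a0 = 0 := by rcases hconstraint with h | h; exact h; omega
      obtain ⟨hne, hor⟩ := hmem 2
      rw [hWcount 2 0, hWcount 2 1, hWcount 2 2] at *
      rcases hor with heq | heq <;> omega
  · -- a0 > 0, hence a2 = 0
    have ha2z : a2 = 0 := by rcases hconstraint with h | h; omega; exact h
    obtain ⟨hne, hor⟩ := hmem 2
    rw [hWcount 2 0, hWcount 2 1, hWcount 2 2] at *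
    rcases hor with heq | heq <;> omega
end

section
/- For every natural number p ≥ 3, the string w = a^{p!+p} b^{p} c^{p!+p} violates the context-free pumping property for L₃: w is a member of L₃, p ≤ |w|, and for every factorization w = u v x y z with |v x y| ≤ p and v y nonempty, there exists a natural number i such that u v^i x y^i z ∉ L₃. -/
private lemma count_flatten_rep (i : ℕ) (l : List (Fin 3)) (d : Fin 3) :
    ((List.replicate i l).flatten).count d = i * l.count d := by
  induction i with
  | zero => simp
  | succ n ih => simp [List.replicate_succ, List.count_append, ih, Nat.succ_mul]; ring

private lemma len_eq_counts (l : List (Fin 3)) :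
    l.length = l.count 0 + l.count 1 + l.count 2 := by
  induction l with
  | nil => simp
  | cons h t ih => fin_cases h <;> simp [List.count_cons, ih] <;> omega

private lemma count0_take (N q ℓ : ℕ) :
    ((List.replicate N (0 : Fin 3) ++ List.replicate q 1 ++ List.replicate N 2).take ℓ).count 0
      = min ℓ N := by
  simp [List.take_append, List.take_replicate, List.count_append,
    List.count_replicate, Nat.min_comm]

private lemma count2_take (N q ℓ : ℕ) :
    ((List.replicate N (0 : Fin 3) ++ List.replicate q 1 ++ List.replicate N 2).take ℓ).count 2
      = min (ℓ - N - q) N := by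
  simp [List.take_append, List.take_replicate, List.count_append,
    List.count_replicate, Nat.min_comm]

/-- For every `p ≥ 3`, the string `w = a^{p!+p} b^p c^{p!+p}` (over `Fin 3`, with
`a = 0`, `b = 1`, `c = 2`) witnesses the failure of the context-free pumping
property for `L₃`: `w ∈ L₃`, `p ≤ |w|`, and for every factorization
`w = u v x y z` with `|v x y| ≤ p` and `v y` nonempty, there is an `i` with
`u v^i x y^i z ∉ L₃`.  Here the `i`-fold repetition `v^i` is expressed as
`(List.replicate i v).flatten`. -/
theorem L3_pumping_violated (p : ℕ) (hp : 3 ≤ p) :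
    (List.replicate (p.factorial + p) (0 : Fin 3) ++ List.replicate p 1 ++
        List.replicate (p.factorial + p) 2) ∈
      { w : List (Fin 3) |
        w.count 0 ≠ w.count 1 ∧ (w.count 0 = w.count 2 ∨ w.count 1 = w.count 2) } ∧
    p ≤ (List.replicate (p.factorial + p) (0 : Fin 3) ++ List.replicate p 1 ++
        List.replicate (p.factorial + p) 2).length ∧
    ∀ u v x y z : List (Fin 3),
      List.replicate (p.factorial + p) (0 : Fin 3) ++ List.replicate p 1 ++
          List.replicate (p.factorial + p) 2 = u ++ v ++ x ++ y ++ z →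
      (v ++ x ++ y).length ≤ p →
      v ++ y ≠ [] →
      ∃ i : ℕ,
        u ++ (List.replicate i v).flatten ++ x ++ (List.replicate i y).flatten ++ z ∉
          { w : List (Fin 3) |
            w.count 0 ≠ w.count 1 ∧ (w.count 0 = w.count 2 ∨ w.count 1 = w.count 2) } := by
  set N := p.factorial + p with hN
  have hfac : 2 * p ≤ p.factorial := by
    obtain ⟨q, rfl⟩ : ∃ q, p = q + 1 := ⟨p - 1, by omega⟩
    have h2 : 2 ≤ q.factorial := by
      calc 2 = Nat.factorial 2 := rfl
        _ ≤ q.factorial := Nat.factorial_le (by omega)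
    rw [Nat.factorial_succ]
    nlinarith
  have hpN : 2 * p < N := by have := p.factorial_pos; omega
  refine ⟨⟨?_, ?_⟩, ?_, ?_⟩
  · simp [List.count_append, List.count_replicate]
    omega
  · left
    simp [List.count_append, List.count_replicate]
  · simp
    omega
  · intro u v x y z heq hlen hne
    -- total counts
    have ht0 : u.count 0 + v.count 0 + x.count 0 + y.count 0 + z.count 0 = N := by
      have h := congrArg (List.count (0 : Fin 3)) heq
      simp [List.count_append, List.count_replicate] at h
      omega
    have ht1 : u.count 1 + v.count 1 + x.count 1 + y.count 1 + z.count 1 = p := by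
      have h := congrArg (List.count (1 : Fin 3)) heq
      simp [List.count_append, List.count_replicate] at h
      omega
    have ht2 : u.count 2 + v.count 2 + x.count 2 + y.count 2 + z.count 2 = N := by
      have h := congrArg (List.count (2 : Fin 3)) heq
      simp [List.count_append, List.count_replicate] at h
      omega
    -- structural lemma: vxy cannot contain both 0's and 2's
    set s := v ++ x ++ y with hs
    have heq' : List.replicate N (0 : Fin 3) ++ List.replicate p 1 ++ List.replicate N 2
        = u ++ (s ++ z) := by rw [heq]; simp [hs, List.append_assoc]
    have heq'' : List.replicate N (0 : Fin 3) ++ List.replicate p 1 ++ List.replicate N 2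
        = (u ++ s) ++ z := by rw [heq']; simp [List.append_assoc]
    have hu : (List.replicate N (0 : Fin 3) ++ List.replicate p 1 ++
        List.replicate N 2).take u.length = u := by
      rw [heq']; exact List.take_left (l₁ := u) (l₂ := s ++ z)
    have hus : (List.replicate N (0 : Fin 3) ++ List.replicate p 1 ++
        List.replicate N 2).take (u.length + s.length) = u ++ s := by
      rw [heq'']
      have := List.take_left (l₁ := u ++ s) (l₂ := z)
      simpa [List.length_append] using this
    have e0 : min u.length N + s.count 0 = min (u.length + s.length) N := by
      have h1 := count0_take N p u.length
      rw [hu] at h1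
      have h2 := count0_take N p (u.length + s.length)
      rw [hus, List.count_append] at h2
      omega
    have e2 : min (u.length - N - p) N + s.count 2
        = min (u.length + s.length - N - p) N := by
      have h1 := count2_take N p u.length
      rw [hu] at h1
      have h2 := count2_take N p (u.length + s.length)
      rw [hus, List.count_append] at h2
      omega
    have hslen : s.length ≤ p := hlen
    have hstruct : s.count 0 = 0 ∨ s.count 2 = 0 := by
      by_contra h
      push_neg at h
      omega
    have hsc0 : s.count 0 = v.count 0 + x.count 0 + y.count 0 := by
      simp [hs, List.count_append]; omega
    have hsc2 : s.count 2 = v.count 2 + x.count 2 + y.count 2 := by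
      simp [hs, List.count_append]; omega
    -- δ values
    have hδlen : (v.count 0 + y.count 0) + (v.count 1 + y.count 1) +
        (v.count 2 + y.count 2) = v.length + y.length := by
      have hv := len_eq_counts v
      have hy := len_eq_counts y
      omega
    have hvylen : 1 ≤ v.length + y.length := by
      rcases Nat.eq_zero_or_pos (v.length + y.length) with h | h
      · exfalso; apply hne
        have hv : v = [] := List.eq_nil_of_length_eq_zero (by omega)
        have hy : y = [] := List.eq_nil_of_length_eq_zero (by omega)
        simp [hv, hy]
      · exact h
    have hslen' : v.length + y.length ≤ p := by
      have : s.length = v.length + x.length + y.length := by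
        simp [hs, List.length_append]; omega
      omega
    have hδ1 : v.count 1 + y.count 1 ≤ p := by
      have h1 := List.count_le_length (a := (1 : Fin 3)) (l := v)
      have h2 := List.count_le_length (a := (1 : Fin 3)) (l := y)
      omega
    by_cases hz : v.count 0 + y.count 0 = 0 ∧ v.count 2 + y.count 2 = 0
    · -- pump b's up to N using divisibility
      obtain ⟨hz0, hz2⟩ := hz
      have hδ1pos : 0 < v.count 1 + y.count 1 := by omega
      have hdvd : (v.count 1 + y.count 1) ∣ p.factorial :=
        Nat.dvd_factorial hδ1pos hδ1
      refine ⟨1 + p.factorial / (v.count 1 + y.count 1), ?_⟩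
      have hmul : (1 + p.factorial / (v.count 1 + y.count 1)) * (v.count 1 + y.count 1)
          = (v.count 1 + y.count 1) + p.factorial := by
        rw [Nat.add_mul, one_mul, Nat.div_mul_cancel hdvd]
      set i := 1 + p.factorial / (v.count 1 + y.count 1) with hi
      obtain ⟨hv0, hy0⟩ : v.count 0 = 0 ∧ y.count 0 = 0 := by omega
      obtain ⟨hv2, hy2⟩ : v.count 2 = 0 ∧ y.count 2 = 0 := by omega
      have hiv : i * v.count 1 + i * y.count 1 = (v.count 1 + y.count 1) + p.factorial := by
        rw [← Nat.mul_add]; exact hmul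
      simp only [Set.mem_setOf_eq, List.count_append, count_flatten_rep, hv0, hy0, hv2,
        hy2, Nat.mul_zero]
      rintro ⟨hAB, -⟩
      exact hAB (by omega)
    · -- pump with i = 2
      refine ⟨2, ?_⟩
      simp only [Set.mem_setOf_eq, List.count_append, count_flatten_rep]
      rcases hstruct with h0 | h2
      · -- no 0's in vxy, so some 2's in vy
        have hv0 : v.count 0 = 0 ∧ y.count 0 = 0 := by omega
        have hδ2pos : 0 < v.count 2 + y.count 2 := by omega
        intro ⟨hAB, hor⟩
        rcases hor with h | h <;> omega
      · have hv2 : v.count 2 = 0 ∧ y.count 2 = 0 := by omega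
        have hδ0pos : 0 < v.count 0 + y.count 0 := by omega
        intro ⟨hAB, hor⟩
        rcases hor with h | h <;> omega
end

section
/- The language L₄ = { w ∈ {a,b,c}* : |w|ₐ = |w|_b and |w|ₐ ≠ |w|_c } is not context-free, i.e., there is no context-free grammar generating L₄. -/
open ContextFreeGrammar

namespace L4aux

universe uN uT
variable {T : Type uT}

variable {g : ContextFreeGrammar T}

/-- Step-counted derivation. -/
inductive DerivesIn (g : ContextFreeGrammar T) :
    List (Symbol T g.NT) → List (Symbol T g.NT) → ℕ → Prop
  | refl (w : List (Symbol T g.NT)) : DerivesIn g w w 0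
  | head {u v w : List (Symbol T g.NT)} {n : ℕ} :
      g.Produces u v → DerivesIn g v w n → DerivesIn g u w (n + 1)

lemma DerivesIn.derives {u v : List (Symbol T g.NT)} {n : ℕ} (h : DerivesIn g u v n) :
    g.Derives u v := by
  induction h with
  | refl => rfl
  | head hp _ ih => exact hp.trans_derives ih

lemma derives_iff_derivesIn {u v : List (Symbol T g.NT)} :
    g.Derives u v ↔ ∃ n, DerivesIn g u v n := by
  constructor
  · intro h
    induction h using Relation.ReflTransGen.head_induction_on with
    | refl => exact ⟨0, .refl v⟩
    | head hp _ ih => exact ⟨ih.choose + 1, .head hp ih.choose_spec⟩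
  · rintro ⟨n, h⟩; exact h.derives

lemma DerivesIn.trans {u v w : List (Symbol T g.NT)} {m n : ℕ}
    (h₁ : DerivesIn g u v m) (h₂ : DerivesIn g v w n) : DerivesIn g u w (m + n) := by
  induction h₁ with
  | refl => simpa using h₂
  | head hp _ ih =>
    have := DerivesIn.head hp (ih h₂)
    rwa [Nat.succ_add] -- fix

lemma DerivesIn.append_left {u v : List (Symbol T g.NT)} {n : ℕ}
    (h : DerivesIn g u v n) (p : List (Symbol T g.NT)) :
    DerivesIn g (p ++ u) (p ++ v) n := by
  induction h with
  | refl => exact .refl _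
  | head hp _ ih => exact .head (hp.append_left p) ih

lemma DerivesIn.append_right {u v : List (Symbol T g.NT)} {n : ℕ}
    (h : DerivesIn g u v n) (p : List (Symbol T g.NT)) :
    DerivesIn g (u ++ p) (v ++ p) n := by
  induction h with
  | refl => exact .refl _
  | head hp _ ih => exact .head (hp.append_right p) ih

lemma DerivesIn.append_both {a a' b b' : List (Symbol T g.NT)} {m n : ℕ}
    (h₁ : DerivesIn g a a' m) (h₂ : DerivesIn g b b' n) :
    DerivesIn g (a ++ b) (a' ++ b') (m + n) :=
  (h₁.append_right b).trans (h₂.append_left a')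

/-- Substitute a derivation into a one-nonterminal context. -/
lemma DerivesIn.subst {root : g.NT} {U Y β : List (Symbol T g.NT)} {n : g.NT} {a b : ℕ}
    (h₁ : DerivesIn g [Symbol.nonterminal root] (U ++ [Symbol.nonterminal n] ++ Y) a)
    (h₂ : DerivesIn g [Symbol.nonterminal n] β b) :
    DerivesIn g [Symbol.nonterminal root] (U ++ β ++ Y) (a + b) :=
  h₁.trans ((h₂.append_left U).append_right Y)

lemma derivesIn_zero {u v : List (Symbol T g.NT)} (h : DerivesIn g u v 0) : u = v := by
  cases h; rfl

lemma derivesIn_nil {s : List (Symbol T g.NT)} {n : ℕ}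
    (h : DerivesIn g [] s n) : s = [] ∧ n = 0 := by
  cases h with
  | refl => exact ⟨rfl, rfl⟩
  | head hp _ =>
    obtain ⟨r, _, hr⟩ := hp
    obtain ⟨p, q, hpq, -⟩ := hr.exists_parts
    simp at hpq

lemma derivesIn_terminal {t : T} {s : List (Symbol T g.NT)} {n : ℕ}
    (h : DerivesIn g [Symbol.terminal t] s n) : s = [Symbol.terminal t] ∧ n = 0 := by
  cases h with
  | refl => exact ⟨rfl, rfl⟩
  | head hp _ =>
    obtain ⟨r, _, hr⟩ := hp
    obtain ⟨p, q, hpq, -⟩ := hr.exists_parts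
    have : p = [] := by
      cases p with
      | nil => rfl
      | cons hd tl =>
        exfalso
        have := congrArg List.length hpq
        simp at this
    subst this
    simp at hpq

lemma derivesIn_nonterminal_head {m : g.NT} {s : List (Symbol T g.NT)} {n : ℕ}
    (h : DerivesIn g [Symbol.nonterminal m] s (n + 1)) :
    ∃ r ∈ g.rules, r.input = m ∧ DerivesIn g r.output s n := by
  cases h with
  | head hp hd =>
    obtain ⟨r, hrmem, hr⟩ := hp
    obtain ⟨p, q, hpq, hout⟩ := hr.exists_parts
    have hp0 : p = [] := by
      cases p with
      | nil => rfl
      | cons hd tl =>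
        exfalso
        have := congrArg List.length hpq
        simp at this
    subst hp0
    have hq0 : q = [] := by simpa using congrArg List.length hpq
    subst hq0
    simp at hpq hout
    subst hout
    exact ⟨r, hrmem, hpq.symm, hd⟩

lemma rewrites_append {N : Type uN} {r : ContextFreeRule T N} {α β v : List (Symbol T N)}
    (h : r.Rewrites (α ++ β) v) :
    (∃ α', r.Rewrites α α' ∧ v = α' ++ β) ∨ (∃ β', r.Rewrites β β' ∧ v = α ++ β') := by
  induction α generalizing v with
  | nil => exact .inr ⟨v, by simpa using h, rfl⟩
  | cons a α' ih =>
    cases h with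
    | head s =>
      exact .inl ⟨r.output ++ α', ContextFreeRule.Rewrites.head α', by simp⟩
    | cons _ hrs =>
      rcases ih hrs with ⟨α'', hα, rfl⟩ | ⟨β', hβ, rfl⟩
      · exact .inl ⟨a :: α'', hα.cons a, rfl⟩
      · exact .inr ⟨β', hβ, rfl⟩

lemma DerivesIn.split {α β s : List (Symbol T g.NT)} {n : ℕ}
    (h : DerivesIn g (α ++ β) s n) :
    ∃ s₁ s₂ n₁ n₂, s = s₁ ++ s₂ ∧ n₁ + n₂ = n ∧
      DerivesIn g α s₁ n₁ ∧ DerivesIn g β s₂ n₂ := by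
  induction n generalizing α β with
  | zero =>
    cases h
    exact ⟨α, β, 0, 0, rfl, rfl, .refl α, .refl β⟩
  | succ n ih =>
    cases h with
    | head hp hd =>
      obtain ⟨r, hrmem, hr⟩ := hp
      rcases rewrites_append hr with ⟨α', hα, rfl⟩ | ⟨β', hβ, rfl⟩
      · obtain ⟨s₁, s₂, n₁, n₂, rfl, hn, h1, h2⟩ := ih hd
        exact ⟨s₁, s₂, n₁ + 1, n₂, rfl, by omega, .head ⟨r, hrmem, hα⟩ h1, h2⟩
      · obtain ⟨s₁, s₂, n₁, n₂, rfl, hn, h1, h2⟩ := ih hd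
        exact ⟨s₁, s₂, n₁, n₂ + 1, rfl, by omega, h1, .head ⟨r, hrmem, hβ⟩ h2⟩

/-- From a derivation of a terminal word from a string `γ`, extract a "heaviest part":
a symbol of `γ` deriving a part of the word of length at least `|w| / |γ|`. -/
lemma bigPart : ∀ (γ : List (Symbol T g.NT)) (w : List T) (m : ℕ),
    DerivesIn g γ (w.map Symbol.terminal) m → 1 ≤ w.length →
    ∃ (s : Symbol T g.NT) (l r w' : List T) (m' d : ℕ),
      w = l ++ w' ++ r ∧ w.length ≤ w'.length * γ.length ∧
      DerivesIn g [s] (w'.map Symbol.terminal) m' ∧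
      DerivesIn g γ (l.map Symbol.terminal ++ [s] ++ r.map Symbol.terminal) d ∧
      d + m' = m := by
  intro γ
  induction γ with
  | nil =>
    intro w m h hw
    obtain ⟨h1, -⟩ := derivesIn_nil h
    rw [List.map_eq_nil_iff] at h1
    subst h1
    simp at hw
  | cons a γ' ih =>
    intro w m h hw
    obtain ⟨s₁, s₂, n₁, n₂, hs, hn, h1, h2⟩ := DerivesIn.split (α := [a]) (β := γ') h
    obtain ⟨w₁, w₂, rfl, rfl, rfl⟩ : ∃ w₁ w₂, w = w₁ ++ w₂ ∧
        s₁ = w₁.map Symbol.terminal ∧ s₂ = w₂.map Symbol.terminal := by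
      rcases List.map_eq_append_iff.mp hs with ⟨w₁, w₂, rfl, h₁, h₂⟩
      exact ⟨w₁, w₂, rfl, h₁.symm, h₂.symm⟩
    by_cases hbig : w₁.length + w₂.length ≤ w₁.length * (γ'.length + 1)
    · -- the head part is big enough
      refine ⟨a, [], w₂, w₁, n₁, n₂, by simp, by simpa using hbig, h1, ?_, by omega⟩
      simpa using (h2.append_left [a])
    · -- recurse into the tail
      push_neg at hbig
      have hw₂ : 1 ≤ w₂.length := by nlinarith [Nat.zero_le (w₁.length * γ'.length)]
      obtain ⟨s, l', r', w', m', d', heq, hlen, hder, hctx, hd⟩ := ih w₂ n₂ h2 hw₂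
      refine ⟨s, w₁ ++ l', r', w', m', n₁ + d', ?_, ?_, hder, ?_, by omega⟩
      · rw [heq]; simp
      · -- arithmetic: |w₁ ++ w₂| ≤ |w'| * (γ'.length + 1)
        have hγ : 1 ≤ γ'.length := by
          rcases Nat.eq_zero_or_pos γ'.length with h0 | h0
          · exfalso
            rw [List.length_eq_zero_iff] at h0
            subst h0
            obtain ⟨hh, -⟩ := derivesIn_nil h2
            rw [List.map_eq_nil_iff] at hh
            subst hh
            simp at hw₂
          · exact h0
        have h3 : w₁.length * γ'.length < w₂.length * 1 := by nlinarith
        have h4 : w₁.length < w'.length := by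
          by_contra hcon
          push_neg at hcon
          nlinarith
        simp only [List.length_append, List.length_cons]
        nlinarith
      · have := (h1.append_both hctx)
        simpa using this

section defs

/-- Relevant nonterminals of a grammar. -/
noncomputable def nts (g : ContextFreeGrammar T) : Finset g.NT := by
  classical exact g.rules.image ContextFreeRule.input

/-- Branching bound. -/
noncomputable def bigK (g : ContextFreeGrammar T) : ℕ :=
  max 2 (g.rules.sup fun r => r.output.length)

/-- Pumping bound. -/
noncomputable def pbound (g : ContextFreeGrammar T) : ℕ :=
  bigK g ^ ((nts g).card + 1)

lemma two_le_bigK (g : ContextFreeGrammar T) : 2 ≤ bigK g := le_max_left _ _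

lemma output_len_le_bigK {g : ContextFreeGrammar T} {r : ContextFreeRule T g.NT}
    (hr : r ∈ g.rules) : r.output.length ≤ bigK g :=
  le_trans (Finset.le_sup (f := fun r => r.output.length) hr) (le_max_right _ _)

lemma input_mem_nts {g : ContextFreeGrammar T} {r : ContextFreeRule T g.NT}
    (hr : r ∈ g.rules) : r.input ∈ nts g := by
  classical
  simpa [nts] using Finset.mem_image_of_mem ContextFreeRule.input hr

/-- The conclusion of the pumping argument. -/
def Pump (g : ContextFreeGrammar T) (w : List T) (P : ℕ) : Prop :=
  ∃ u v t x y : List T, w = u ++ v ++ t ++ x ++ y ∧ 1 ≤ v.length + x.length ∧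
    v.length + t.length + x.length ≤ P ∧
    ∃ n' : g.NT,
      g.Derives [Symbol.nonterminal g.initial]
        (u.map Symbol.terminal ++ [Symbol.nonterminal n'] ++ y.map Symbol.terminal) ∧
      g.Derives [Symbol.nonterminal n']
        (v.map Symbol.terminal ++ [Symbol.nonterminal n'] ++ x.map Symbol.terminal) ∧
      g.Derives [Symbol.nonterminal n'] (t.map Symbol.terminal)

lemma pump_loop {g : ContextFreeGrammar T} {n' : g.NT} {v x : List T}
    (h : g.Derives [Symbol.nonterminal n']
      (v.map Symbol.terminal ++ [Symbol.nonterminal n'] ++ x.map Symbol.terminal)) :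
    ∀ i : ℕ, g.Derives [Symbol.nonterminal n']
      ((List.replicate i v).flatten.map Symbol.terminal ++ [Symbol.nonterminal n'] ++
        (List.replicate i x).flatten.map Symbol.terminal) := by
  intro i
  induction i with
  | zero => simpa using Derives.refl _
  | succ i ihi =>
    have hv : (List.replicate (i + 1) v).flatten = v ++ (List.replicate i v).flatten := by
      rw [List.replicate_succ]; simp
    have hx : (List.replicate (i + 1) x).flatten = (List.replicate i x).flatten ++ x := by
      rw [List.replicate_succ']; simp
    rw [hv, hx]
    refine h.trans ?_
    have := (ihi.append_left (v.map Symbol.terminal)).append_right (x.map Symbol.terminal)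
    simpa [List.append_assoc] using this

lemma Pump.mem_language {g : ContextFreeGrammar T} {w : List T} {P : ℕ}
    (hp : Pump g w P) :
    ∃ u v t x y : List T, w = u ++ v ++ t ++ x ++ y ∧ 1 ≤ v.length + x.length ∧
      v.length + t.length + x.length ≤ P ∧
      ∀ i : ℕ, (u ++ (List.replicate i v).flatten ++ t ++ (List.replicate i x).flatten ++ y)
        ∈ g.language := by
  obtain ⟨u, v, t, x, y, hw, h1, h2, n', hu, hloop, ht⟩ := hp
  refine ⟨u, v, t, x, y, hw, h1, h2, fun i => ?_⟩
  rw [mem_language_iff]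
  have l1 := pump_loop hloop i
  have l2 := hu.trans ((l1.append_left (u.map Symbol.terminal)).append_right
    (y.map Symbol.terminal))
  have l3 := ((ht.append_left
      (u.map Symbol.terminal ++ (List.replicate i v).flatten.map Symbol.terminal)).append_right
      ((List.replicate i x).flatten.map Symbol.terminal ++ y.map Symbol.terminal))
  have l4 : g.Derives
      (u.map Symbol.terminal ++
        ((List.replicate i v).flatten.map Symbol.terminal ++ [Symbol.nonterminal n'] ++
          (List.replicate i x).flatten.map Symbol.terminal) ++ y.map Symbol.terminal)
      ((u ++ (List.replicate i v).flatten ++ t ++ (List.replicate i x).flatten ++ y).map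
        Symbol.terminal) := by
    simpa [List.append_assoc] using l3
  exact l2.trans l4

end defs

section inner

/-- Chain entries recording ancestors on the current path. -/
structure Ent (T : Type uT) (N : Type uN) where
  nt : N
  u : List T
  y : List T
  v : List T
  x : List T
  mo : ℕ

variable {g : ContextFreeGrammar T}

/-- Invariant for chain entries, relative to the current node. -/
def EntOK (g : ContextFreeGrammar T) (ncur : g.NT) (wcur U Y : List T) (mocur : ℕ)
    (e : Ent T g.NT) : Prop :=
  DerivesIn g [Symbol.nonterminal g.initial]
      (e.u.map Symbol.terminal ++ [Symbol.nonterminal e.nt] ++ e.y.map Symbol.terminal) e.mo ∧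
  g.Derives [Symbol.nonterminal e.nt]
      (e.v.map Symbol.terminal ++ [Symbol.nonterminal ncur] ++ e.x.map Symbol.terminal) ∧
  U = e.u ++ e.v ∧ Y = e.x ++ e.y ∧ e.mo < mocur ∧
  e.v.length + e.x.length + wcur.length ≤ pbound g ∧ e.nt ∈ nts g

lemma inner (g : ContextFreeGrammar T) (wstar : List T) (S : ℕ) :
    ∀ mcur : ℕ, ∀ (ncur : g.NT) (wcur U Y : List T) (mocur : ℕ) (chain : List (Ent T g.NT)),
    DerivesIn g [Symbol.nonterminal g.initial]
      (U.map Symbol.terminal ++ [Symbol.nonterminal ncur] ++ Y.map Symbol.terminal) mocur →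
    DerivesIn g [Symbol.nonterminal ncur] (wcur.map Symbol.terminal) mcur →
    wstar = U ++ wcur ++ Y →
    mocur + mcur = S →
    bigK g ^ ((nts g).card - chain.length) < wcur.length →
    (chain.map Ent.nt).Nodup →
    (∀ e ∈ chain, EntOK g ncur wcur U Y mocur e) →
    Pump g wstar (pbound g) ∨
      ∃ S' : ℕ, S' < S ∧
        DerivesIn g [Symbol.nonterminal g.initial] (wstar.map Symbol.terminal) S' := by
  classical
  intro mcur
  induction mcur using Nat.strong_induction_on with
  | _ mcur ih =>
  intro ncur wcur U Y mocur chain hC1 hC2 hC3 hC4 hC5 hnd hent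
  -- current nonterminal is a rule input (there is at least one step)
  have hwcur1 : 1 ≤ wcur.length := by
    have h1 : 1 ≤ bigK g ^ ((nts g).card - chain.length) := Nat.one_le_pow _ _ (by
      have := two_le_bigK g; omega)
    omega
  have hmcur1 : 1 ≤ mcur := by
    rcases Nat.eq_zero_or_pos mcur with h0 | h0
    · exfalso
      subst h0
      have heq := derivesIn_zero hC2
      cases wcur with
      | nil => simp at hwcur1
      | cons a tl => simp at heq
    · exact h0
  obtain ⟨mcur', rfl⟩ : ∃ mcur', mcur = mcur' + 1 := ⟨mcur - 1, by omega⟩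
  obtain ⟨r, hrmem, hrin, hrder⟩ := derivesIn_nonterminal_head hC2
  -- repeat check
  by_cases hrep : ∃ e ∈ chain, e.nt = ncur
  · obtain ⟨e, hechain, hent_eq⟩ := hrep
    obtain ⟨hE1, hE2, hE3, hE4, hE5, hE6, hE7⟩ := hent e hechain
    by_cases hvx : e.v ++ e.x = []
    · -- bad repeat: splice out the loop, derivation gets shorter
      right
      obtain ⟨hv0, hx0⟩ := List.append_eq_nil_iff.mp hvx
      refine ⟨e.mo + (mcur' + 1), by omega, ?_⟩
      have := hE1.subst (n := e.nt) (by rw [hent_eq]; exact hC2)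
      have hweq : wstar = e.u ++ wcur ++ e.y := by
        rw [hC3, hE3, hE4, hv0, hx0]; simp
      rw [hweq]
      simpa [List.append_assoc] using this
    · -- good repeat: pumping decomposition found
      left
      refine ⟨e.u, e.v, wcur, e.x, e.y, ?_, ?_, by omega, e.nt, ?_, ?_, ?_⟩
      · rw [hC3, hE3, hE4]; simp [List.append_assoc]
      · have := List.length_pos_iff.mpr hvx
        simp only [List.length_append] at this
        omega
      · exact hE1.derives
      · simpa [hent_eq] using hE2
      · rw [hent_eq]; exact hC2.derives
  · -- no repeat: find the heaviest child and descend
    push_neg at hrep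
    have hncur_mem : ncur ∈ nts g := by rw [← hrin]; exact input_mem_nts hrmem
    obtain ⟨s, l, rr, w', m', d, hwsplit, hwlen, hsder, hctx, hdm⟩ :=
      bigPart r.output wcur mcur' hrder hwcur1
    have hklen : r.output.length ≤ bigK g := output_len_le_bigK hrmem
    have hwlen' : wcur.length ≤ w'.length * bigK g :=
      le_trans hwlen (Nat.mul_le_mul_left _ hklen)
    -- case split on whether we reset the chain or record the current node
    have hstep : g.Produces [Symbol.nonterminal ncur] r.output :=
      ⟨r, hrmem, by rw [← hrin]; exact ContextFreeRule.Rewrites.input_output⟩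
    by_cases hP : pbound g < wcur.length
    case pos =>
      -- reset
      have hchild0 : bigK g ^ (nts g).card < w'.length := by
        have hm : bigK g ^ (nts g).card * bigK g < w'.length * bigK g := by
          calc bigK g ^ (nts g).card * bigK g = bigK g ^ ((nts g).card + 1) := by ring
          _ < wcur.length := hP
          _ ≤ w'.length * bigK g := hwlen'
        exact Nat.lt_of_mul_lt_mul_right hm
      have hw'2 : 2 ≤ w'.length := by
        have h1 : 1 ≤ bigK g ^ (nts g).card := Nat.one_le_pow _ _ (by
          have := two_le_bigK g; omega)
        omega
      obtain ⟨nchild, rfl⟩ : ∃ nchild, s = Symbol.nonterminal nchild := by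
        cases s with
        | terminal t =>
          exfalso
          obtain ⟨hw', -⟩ := derivesIn_terminal hsder
          have : w'.length = 1 := by
            have := congrArg List.length hw'
            simpa using this
          omega
        | nonterminal n => exact ⟨n, rfl⟩
      have hctx' : DerivesIn g [Symbol.nonterminal ncur]
          (l.map Symbol.terminal ++ [Symbol.nonterminal nchild] ++ rr.map Symbol.terminal)
          (d + 1) := .head hstep hctx
      have hC1' := hC1.subst hctx'
      have hC1'' : DerivesIn g [Symbol.nonterminal g.initial]
          ((U ++ l).map Symbol.terminal ++ [Symbol.nonterminal nchild] ++
            (rr ++ Y).map Symbol.terminal) (mocur + (d + 1)) := by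
        simpa [List.append_assoc] using hC1'
      refine ih m' (by omega) nchild w' (U ++ l) (rr ++ Y) (mocur + (d + 1)) [] hC1'' hsder
        ?_ (by omega) (by simpa using hchild0) (by simp) (by simp)
      rw [hC3, hwsplit]; simp
    case neg =>
      -- record the current node and descend
      push_neg at hP
      have hnodup2 : ((chain.map Ent.nt) ++ [ncur]).Nodup := by
        rw [List.nodup_append]
        refine ⟨hnd, List.nodup_singleton _, ?_⟩
        intro a ha b hb hab; subst hab
        simp only [List.mem_singleton] at hb
        subst hb
        obtain ⟨e, he, hee⟩ := List.mem_map.mp ha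
        exact hrep e he hee
      have hcard : chain.length + 1 ≤ (nts g).card := by
        have h1 : ((chain.map Ent.nt) ++ [ncur]).toFinset.card
            = ((chain.map Ent.nt) ++ [ncur]).length := List.toFinset_card_of_nodup hnodup2
        have h2 : ((chain.map Ent.nt) ++ [ncur]).toFinset ⊆ nts g := by
          intro a ha
          rw [List.mem_toFinset] at ha
          rcases List.mem_append.mp ha with ha | ha
          · obtain ⟨e, he, hee⟩ := List.mem_map.mp ha
            have := (hent e he).2.2.2.2.2.2
            rwa [hee] at this
          · simp only [List.mem_singleton] at ha
            subst ha
            exact hncur_mem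
        have h3 := Finset.card_le_card h2
        rw [h1] at h3
        simpa using h3
      have hchild0 : bigK g ^ ((nts g).card - (chain.length + 1)) < w'.length := by
        have hm : bigK g ^ ((nts g).card - (chain.length + 1)) * bigK g
            < w'.length * bigK g := by
          calc bigK g ^ ((nts g).card - (chain.length + 1)) * bigK g
              = bigK g ^ (((nts g).card - (chain.length + 1)) + 1) := by ring
          _ = bigK g ^ ((nts g).card - chain.length) := by congr 1; omega
          _ < wcur.length := hC5
          _ ≤ w'.length * bigK g := hwlen'
        exact Nat.lt_of_mul_lt_mul_right hm
      have hw'2 : 2 ≤ w'.length := by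
        have h1 : 1 ≤ bigK g ^ ((nts g).card - (chain.length + 1)) := Nat.one_le_pow _ _ (by
          have := two_le_bigK g; omega)
        omega
      obtain ⟨nchild, rfl⟩ : ∃ nchild, s = Symbol.nonterminal nchild := by
        cases s with
        | terminal t =>
          exfalso
          obtain ⟨hw', -⟩ := derivesIn_terminal hsder
          have : w'.length = 1 := by
            have := congrArg List.length hw'
            simpa using this
          omega
        | nonterminal n => exact ⟨n, rfl⟩
      have hctx' : DerivesIn g [Symbol.nonterminal ncur]
          (l.map Symbol.terminal ++ [Symbol.nonterminal nchild] ++ rr.map Symbol.terminal)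
          (d + 1) := .head hstep hctx
      have hC1' := hC1.subst hctx'
      have hC1'' : DerivesIn g [Symbol.nonterminal g.initial]
          ((U ++ l).map Symbol.terminal ++ [Symbol.nonterminal nchild] ++
            (rr ++ Y).map Symbol.terminal) (mocur + (d + 1)) := by
        simpa [List.append_assoc] using hC1'
      have hwcur_len : wcur.length = l.length + w'.length + rr.length := by
        rw [hwsplit]; simp; omega
      set newe : Ent T g.NT := ⟨ncur, U, Y, l, rr, mocur⟩ with hnewe
      set chain' : List (Ent T g.NT) :=
        (chain.map fun e => ⟨e.nt, e.u, e.y, e.v ++ l, rr ++ e.x, e.mo⟩) ++ [newe]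
        with hchain'
      have hlen' : chain'.length = chain.length + 1 := by simp [hchain']
      refine ih m' (by omega) nchild w' (U ++ l) (rr ++ Y) (mocur + (d + 1)) chain'
        hC1'' hsder ?_ (by omega) ?_ ?_ ?_
      · rw [hC3, hwsplit]; simp
      · rw [hlen']; exact hchild0
      · -- Nodup
        have : chain'.map Ent.nt = (chain.map Ent.nt) ++ [ncur] := by
          simp [hchain', hnewe, List.map_map, Function.comp]
        rw [this]
        exact hnodup2
      · -- entries invariant
        intro e' he'
        rcases List.mem_append.mp he' with he' | he'
        · obtain ⟨e, he, rfl⟩ := List.mem_map.mp he'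
          obtain ⟨hE1, hE2, hE3, hE4, hE5, hE6, hE7⟩ := hent e he
          unfold EntOK
          dsimp only
          refine ⟨hE1, ?_, ?_, ?_, by omega, ?_, hE7⟩
          · have := hE2.trans (((hctx'.derives).append_left
              (e.v.map Symbol.terminal)).append_right (e.x.map Symbol.terminal))
            simpa [List.append_assoc] using this
          · rw [hE3]; simp
          · rw [hE4]; simp
          · simp only [List.length_append]
            omega
        · simp only [List.mem_singleton] at he'
          subst he'
          rw [hnewe]
          unfold EntOK
          dsimp only
          refine ⟨hC1, hctx'.derives, rfl, rfl, by omega, by omega, hncur_mem⟩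

end inner

/-- The pumping lemma for context-free grammars. -/
theorem cfg_pumping (g : ContextFreeGrammar T) {w : List T} (hw : w ∈ g.language)
    (hlen : pbound g < w.length) :
    ∃ u v t x y : List T, w = u ++ v ++ t ++ x ++ y ∧ 1 ≤ v.length + x.length ∧
      v.length + t.length + x.length ≤ pbound g ∧
      ∀ i : ℕ, (u ++ (List.replicate i v).flatten ++ t ++ (List.replicate i x).flatten ++ y)
        ∈ g.language := by
  rw [mem_language_iff] at hw
  obtain ⟨S, hS⟩ := derives_iff_derivesIn.mp hw
  clear hw
  suffices h : Pump g w (pbound g) from h.mem_language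
  induction S using Nat.strong_induction_on with
  | _ S ih =>
    have hC5 : bigK g ^ ((nts g).card - ([] : List (Ent T g.NT)).length) < w.length := by
      have h1 : bigK g ^ (nts g).card ≤ bigK g ^ ((nts g).card + 1) :=
        Nat.pow_le_pow_right (by have := two_le_bigK g; omega) (by omega)
      have h2 : pbound g = bigK g ^ ((nts g).card + 1) := rfl
      simp only [List.length_nil, Nat.sub_zero]
      omega
    have := inner g w S S g.initial w [] [] 0 []
      (by simpa using DerivesIn.refl [Symbol.nonterminal g.initial]) hS (by simp) (by omega)
      hC5 (by simp) (by simp)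
    rcases this with hpump | ⟨S', hS', hder⟩
    · exact hpump
    · exact ih S' hS' hder

lemma count_join_replicate {α : Type} [BEq α] (i : ℕ) (v : List α) (a : α) :
    ((List.replicate i v).flatten).count a = i * v.count a := by
  induction i with
  | zero => simp
  | succ i ihi => simp [List.replicate_succ, List.count_append, ihi, Nat.succ_mul]; omega

lemma fin3_length_eq (w : List (Fin 3)) :
    w.length = w.count 0 + w.count 1 + w.count 2 := by
  induction w with
  | nil => simp
  | cons a tl ihw =>
    fin_cases a <;> simp [List.count_cons, ihw] <;> omega

end L4aux

/-- The language `L₄ = { w ∈ {a,b,c}* : |w|ₐ = |w|_b ∧ |w|ₐ ≠ |w|_c }`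
(over the alphabet `Fin 3`, with `a = 0`, `b = 1`, `c = 2`) is not context-free. -/
theorem L4_not_contextFree :
    ¬ Language.IsContextFree
      { w : List (Fin 3) |
        w.count 0 = w.count 1 ∧ w.count 0 ≠ w.count 2 } := by
  rintro ⟨g, hg⟩
  set P := L4aux.pbound g with hP
  set A := 2 * P.factorial with hA
  set C := P.factorial with hC
  have hfac1 : 1 ≤ P.factorial := Nat.one_le_iff_ne_zero.mpr (Nat.factorial_ne_zero P)
  have hPfac : P ≤ P.factorial := Nat.self_le_factorial P
  set z : List (Fin 3) :=
    List.replicate A 0 ++ List.replicate C 2 ++ List.replicate A 1 with hz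
  have hcz0 : z.count 0 = A := by simp [hz, List.count_replicate]
  have hcz1 : z.count 1 = A := by simp [hz, List.count_replicate]
  have hcz2 : z.count 2 = C := by simp [hz, List.count_replicate]
  have hzmem : z ∈ g.language := by
    rw [hg]
    refine ⟨by rw [hcz0, hcz1], by rw [hcz0, hcz2]; omega⟩
  have hzlen : P < z.length := by
    have : z.length = A + C + A := by simp [hz]; omega
    omega
  obtain ⟨u, v, t, x, y, hw, h1, h2, hpump⟩ := L4aux.cfg_pumping g hzmem hzlen
  -- membership of all pumped words in L₄
  have hmem : ∀ i : ℕ,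
      (u ++ (List.replicate i v).flatten ++ t ++ (List.replicate i x).flatten ++ y).count 0 =
        (u ++ (List.replicate i v).flatten ++ t ++ (List.replicate i x).flatten ++ y).count 1 ∧
      (u ++ (List.replicate i v).flatten ++ t ++ (List.replicate i x).flatten ++ y).count 0 ≠
        (u ++ (List.replicate i v).flatten ++ t ++ (List.replicate i x).flatten ++ y).count 2 := by
    intro i
    have := hpump i
    rw [hg] at this
    exact this
  -- count bookkeeping
  have hcount : ∀ (i : ℕ) (σ : Fin 3),
      (u ++ (List.replicate i v).flatten ++ t ++ (List.replicate i x).flatten ++ y).count σ =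
        (u.count σ + t.count σ + y.count σ) + i * (v.count σ + x.count σ) := by
    intro i σ
    simp [List.count_append, L4aux.count_join_replicate]
    ring
  have hzcount : ∀ σ : Fin 3,
      z.count σ = (u.count σ + t.count σ + y.count σ) + (v.count σ + x.count σ) := by
    intro σ
    rw [hw]
    simp [List.count_append]
    ring
  have e0 : u.count 0 + t.count 0 + y.count 0 + (v.count 0 + x.count 0) = A := by
    rw [← hcz0, hzcount 0]
  have e1 : u.count 1 + t.count 1 + y.count 1 + (v.count 1 + x.count 1) = A := by
    rw [← hcz1, hzcount 1]
  have e2 : u.count 2 + t.count 2 + y.count 2 + (v.count 2 + x.count 2) = C := by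
    rw [← hcz2, hzcount 2]
  have f1 := (hmem 1).1
  have f2 := (hmem 2).1
  rw [hcount 1 0, hcount 1 1] at f1
  rw [hcount 2 0, hcount 2 1] at f2
  -- the window v ++ t ++ x cannot contain both `a`s and `b`s
  set m : List (Fin 3) := v ++ t ++ x with hm
  have hmlen : m.length ≤ P := by
    have : m.length = v.length + t.length + x.length := by simp [hm]; omega
    omega
  have hzm : z = u ++ m ++ y := by rw [hw, hm]; simp [List.append_assoc]
  have hwin : m.count 0 = 0 ∨ m.count 1 = 0 := by
    by_contra hcon
    push_neg at hcon
    obtain ⟨hm0, hm1⟩ := hcon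
    -- claim (ii): u.length < A
    have hii : u.length < A := by
      by_contra hcon2
      push_neg at hcon2
      have htu : z.take A = List.replicate A 0 := by
        rw [hz]
        rw [List.append_assoc]
        rw [List.take_append_of_le_length (by simp)]
        simp
      have htu2 : z.take A = u.take A := by
        rw [hzm]
        rw [List.take_append_of_le_length (by simp; omega)]
        rw [List.take_append_of_le_length (by omega)]
      have hcu : A ≤ u.count 0 := by
        have hsub : (u.take A).Sublist u := List.take_sublist A u
        have := hsub.count_le 0
        rw [← htu2, htu] at this
        simpa using this
      have hz0 : z.count 0 = u.count 0 + m.count 0 + y.count 0 := by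
        rw [hzm]; simp [List.count_append]; omega
      omega
    -- claim (i): A + C < u.length + m.length
    have hi : A + C < u.length + m.length := by
      by_contra hcon2
      push_neg at hcon2
      have ht1 : z.take (A + C) = List.replicate A 0 ++ List.replicate C 2 := by
        rw [hz, List.take_append_of_le_length (by simp)]
        simp
      have ht2 : z.take (u.length + m.length) = u ++ m := by
        rw [hzm]
        rw [show u.length + m.length = (u ++ m).length by simp]
        exact List.take_left
      have hsub : (u ++ m).Sublist (z.take (A + C)) := by
        rw [← ht2]
        have heq2 : z.take (u.length + m.length)
            = (z.take (A + C)).take (u.length + m.length) := by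
          rw [List.take_take, min_eq_left hcon2]
        rw [heq2]
        exact List.take_sublist _ _
      have hle := hsub.count_le 1
      rw [ht1] at hle
      simp [List.count_append, List.count_replicate] at hle
      have hum : (u ++ m).count 1 = 0 := by omega
      simp [List.count_append] at hum
      omega
    omega
  -- hence v and x consist only of `c`s
  have hmc0 : v.count 0 + x.count 0 ≤ m.count 0 := by
    rw [hm]; simp [List.count_append]
  have hmc1 : v.count 1 + x.count 1 ≤ m.count 1 := by
    rw [hm]; simp [List.count_append]
  have hD0z : v.count 0 + x.count 0 = 0 := by
    rcases hwin with h | h <;> omega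
  have hD1z : v.count 1 + x.count 1 = 0 := by
    rcases hwin with h | h <;> omega
  -- so there is at least one `c` in v ++ x
  have hlv := L4aux.fin3_length_eq v
  have hlx := L4aux.fin3_length_eq x
  have hlt := L4aux.fin3_length_eq t
  have hr1 : 1 ≤ v.count 2 + x.count 2 := by omega
  have hr2 : v.count 2 + x.count 2 ≤ P := by
    have hml : m.length = v.length + t.length + x.length := by rw [hm]; simp; omega
    have h3 : v.count 2 ≤ v.length := List.count_le_length
    have h4 : x.count 2 ≤ x.length := List.count_le_length
    omega
  -- pump the `c`s until all three counts agree
  have hdvd : (v.count 2 + x.count 2) ∣ P.factorial := Nat.dvd_factorial (by omega) hr2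
  have hcontr := (hmem (P.factorial / (v.count 2 + x.count 2) + 1)).2
  rw [hcount _ 0, hcount _ 2] at hcontr
  apply hcontr
  rw [hD0z, Nat.mul_zero, Nat.add_zero]
  have hmul : (P.factorial / (v.count 2 + x.count 2) + 1) * (v.count 2 + x.count 2)
      = P.factorial + (v.count 2 + x.count 2) := by
    rw [Nat.add_mul, one_mul, Nat.div_mul_cancel hdvd]
  rw [hmul]
  omega
end
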